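/- arXiv:1210.2972 — 2 statements merged into one kernel-verified Lean document; each statement's English description precedes it below -/
import Mathlib

section
/- Given Petri nets N₁ and N₂, augmenting each net with three new places p₁, p₂, p₃ (p₁ initially holding one token, p₂, p₃ empty) and three transitions tᵢ moving one token from pᵢ to p_{(i mod 3)+1} yields nets whose reachability sets are equal if and only if Reach(N₁) = Reach(N₂); moreover, in the augmented nets, every reachable marking lies on a cycle of length three. -/
structure PetriNet (P T : Type) where
  pre : P → T → ℕ
  post : T → P → ℕ
  M0 : P → ℕ

namespace PetriNet

variable {P T : Type}

/-- Transition `t` is enabled at marking `M`. -/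
def enabled (N : PetriNet P T) (t : T) (M : P → ℕ) : Prop :=
  ∀ p, N.pre p t ≤ M p

/-- `M [t⟩ M'`: firing transition `t` at `M` yields `M'`. -/
def fires (N : PetriNet P T) (t : T) (M M' : P → ℕ) : Prop :=
  N.enabled t M ∧ ∀ p, M' p = M p + N.post t p - N.pre p t

/-- One-step relation `M → M'`. -/
def step (N : PetriNet P T) (M M' : P → ℕ) : Prop := ∃ t, N.fires t M M'

/-- Reachability `M →* M'`: reflexive-transitive closure of `step`. -/
def reach (N : PetriNet P T) : (P → ℕ) → (P → ℕ) → Prop :=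
  Relation.ReflTransGen N.step

/-- The reachability set of `N`. -/
def Reach (N : PetriNet P T) : Set (P → ℕ) := {M | N.reach N.M0 M}

end PetriNet

/-- Augment a net with three new places p₁, p₂, p₃ (p₁ initially marked) and
transitions tᵢ moving one token from pᵢ to p_{(i mod 3)+1}. -/
def augment {P T : Type} (N : PetriNet P T) : PetriNet (P ⊕ Fin 3) (T ⊕ Fin 3) where
  pre := fun q t =>
    match q, t with
    | Sum.inl p, Sum.inl t => N.pre p t
    | Sum.inl _, Sum.inr _ => 0
    | Sum.inr _, Sum.inl _ => 0
    | Sum.inr i, Sum.inr j => if i = j then 1 else 0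
  post := fun t q =>
    match t, q with
    | Sum.inl t, Sum.inl p => N.post t p
    | Sum.inr _, Sum.inl _ => 0
    | Sum.inl _, Sum.inr _ => 0
    | Sum.inr j, Sum.inr i => if i = j + 1 then 1 else 0
  M0 := fun q =>
    match q with
    | Sum.inl p => N.M0 p
    | Sum.inr i => if i = 0 then 1 else 0

/-- Extend a marking of `P` with a single Fin-3 token at position `i`. -/
def extM {P : Type} (M : P → ℕ) (i : Fin 3) : P ⊕ Fin 3 → ℕ
  | Sum.inl p => M p
  | Sum.inr k => if k = i then 1 else 0

lemma rot_step {P T : Type} (N : PetriNet P T) (M : P → ℕ) (i : Fin 3) :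
    (augment N).step (extM M i) (extM M (i + 1)) := by
  refine ⟨Sum.inr i, ?_, ?_⟩
  · intro q
    cases q with
    | inl p => simp [augment, extM]
    | inr k => simp [augment, extM]
  · intro q
    cases q with
    | inl p => simp [augment, extM]
    | inr k =>
      simp only [augment, extM]
      fin_cases i <;> fin_cases k <;> decide

lemma orig_step {P T : Type} (N : PetriNet P T) {M M' : P → ℕ} (i : Fin 3)
    (h : N.step M M') : (augment N).step (extM M i) (extM M' i) := by
  obtain ⟨t, ht, hM⟩ := h
  refine ⟨Sum.inl t, ?_, ?_⟩
  · intro q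
    cases q with
    | inl p => exact ht p
    | inr k => simp [augment, extM]
  · intro q
    cases q with
    | inl p => simpa [augment, extM] using hM p
    | inr k => simp [augment, extM]

lemma aug_M0 {P T : Type} (N : PetriNet P T) : (augment N).M0 = extM N.M0 0 := by
  funext q; cases q <;> rfl

lemma aug_reach_iff {P T : Type} (N : PetriNet P T) (M : P ⊕ Fin 3 → ℕ) :
    M ∈ (augment N).Reach ↔ ∃ M' ∈ N.Reach, ∃ i, M = extM M' i := by
  constructor
  · intro h
    induction h with
    | refl => exact ⟨N.M0, Relation.ReflTransGen.refl, 0, (aug_M0 N)⟩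
    | tail _hab hbc ih =>
      obtain ⟨M', hM', i, rfl⟩ := ih
      obtain ⟨t, ht, hfire⟩ := hbc
      cases t with
      | inl t =>
        refine ⟨fun p => M' p + N.post t p - N.pre p t,
          hM'.tail ⟨t, fun p => ht (Sum.inl p), fun p => rfl⟩, i, ?_⟩
        funext q
        cases q with
        | inl p => simpa [augment, extM] using hfire (Sum.inl p)
        | inr k => simpa [augment, extM] using hfire (Sum.inr k)
      | inr j =>
        have hji : j = i := by
          have := ht (Sum.inr j)
          simp [augment, extM] at this
          by_contra hne
          simp [hne] at this
        subst hji
        refine ⟨M', hM', j + 1, ?_⟩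
        funext q
        cases q with
        | inl p => simpa [augment, extM] using hfire (Sum.inl p)
        | inr k =>
          have := hfire (Sum.inr k)
          simp only [augment, extM] at this ⊢
          rw [this]
          fin_cases j <;> fin_cases k <;> decide
  · rintro ⟨M', hM', i, rfl⟩
    have h0 : (augment N).reach (augment N).M0 (extM M' 0) := by
      rw [aug_M0]
      induction hM' with
      | refl => exact Relation.ReflTransGen.refl
      | tail _ h ih => exact ih.tail (orig_step N 0 h)
    have : ∀ j : Fin 3, (augment N).reach (extM M' 0) (extM M' j) := by
      intro j
      fin_cases j
      · exact Relation.ReflTransGen.refl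
      · exact Relation.ReflTransGen.single (rot_step N M' 0)
      · exact (Relation.ReflTransGen.single (rot_step N M' 0)).tail (rot_step N M' 1)
    exact h0.trans (this i)

lemma cycles {P T : Type} (N : PetriNet P T) :
    ∀ M ∈ (augment N).Reach, ∃ M₂ M₃,
      (augment N).step M M₂ ∧ (augment N).step M₂ M₃ ∧ (augment N).step M₃ M := by
  intro M hM
  obtain ⟨M', _, i, rfl⟩ := (aug_reach_iff N M).1 hM
  refine ⟨extM M' (i + 1), extM M' (i + 1 + 1), rot_step N M' i, rot_step N M' (i + 1), ?_⟩
  have h3 : i + 1 + 1 + 1 = i := by fin_cases i <;> decide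
  simpa [h3] using rot_step N M' (i + 1 + 1)

/-- The augmented nets have equal reachability sets iff the original nets do;
moreover every reachable marking of an augmented net lies on a cycle of
length three. -/
theorem augment_reach_eq_iff_and_three_cycles {P T₁ T₂ : Type}
    (N₁ : PetriNet P T₁) (N₂ : PetriNet P T₂) :
    ((augment N₁).Reach = (augment N₂).Reach ↔ N₁.Reach = N₂.Reach) ∧
      (∀ M ∈ (augment N₁).Reach, ∃ M₂ M₃,
        (augment N₁).step M M₂ ∧ (augment N₁).step M₂ M₃ ∧ (augment N₁).step M₃ M) ∧
      (∀ M ∈ (augment N₂).Reach, ∃ M₂ M₃,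
        (augment N₂).step M M₂ ∧ (augment N₂).step M₂ M₃ ∧ (augment N₂).step M₃ M) := by
  refine ⟨⟨fun h => ?_, fun h => ?_⟩, cycles N₁, cycles N₂⟩
  · ext M
    have key : ∀ {T T' : Type} (Na : PetriNet P T) (Nb : PetriNet P T'),
        (augment Na).Reach = (augment Nb).Reach → M ∈ Na.Reach → M ∈ Nb.Reach := by
      intro T T' Na Nb heq hM
      have h1 : extM M 0 ∈ (augment Na).Reach :=
        (aug_reach_iff Na _).2 ⟨M, hM, 0, rfl⟩
      rw [heq] at h1
      obtain ⟨M', hM', i, hext⟩ := (aug_reach_iff Nb _).1 h1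
      have : M = M' := by
        funext p
        exact congrFun hext (Sum.inl p)
      rw [this]; exact hM'
    exact ⟨key N₁ N₂ h, key N₂ N₁ h.symm⟩
  · ext M
    simp only [aug_reach_iff, h]
end

section
/- If X ⊆ ℕⁿ is a semilinear set, then pre(X) := {M ∈ ℕⁿ : ∃M' ∈ X, M → M'} (the set of markings having a one-step successor in X under the firing relation of a Petri net with n places) is semilinear. -/
/-- A linear subset: base vector plus ℕ-linear combinations of finitely many periods. -/
def LinearSet {M : Type*} [AddCommMonoid M] (E : Set M) : Prop :=
  ∃ (x : M) (m : ℕ) (y : Fin m → M),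
    E = {v | ∃ k : Fin m → ℕ, v = x + ∑ i, k i • y i}

/-- A semilinear subset: finite union of linear sets. -/
def SemilinearSet {M : Type*} [AddCommMonoid M] (E : Set M) : Prop :=
  ∃ (m : ℕ) (L : Fin m → Set M), (∀ i, LinearSet (L i)) ∧ E = ⋃ i, L i

/-- pre(X): the set of markings having a one-step successor in X. -/
def preSet {P T : Type} (N : PetriNet P T) (X : Set (P → ℕ)) : Set (P → ℕ) :=
  {M | ∃ M' ∈ X, N.step M M'}

section Aux

variable {M : Type*} [AddCommMonoid M]

lemma LinearSet.semilinear {E : Set M} (h : LinearSet E) : SemilinearSet E :=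
  ⟨1, fun _ => E, fun _ => h, (Set.iUnion_const E).symm⟩

lemma semilinear_empty : SemilinearSet (∅ : Set M) :=
  ⟨0, fun i => i.elim0, fun i => i.elim0, by simp⟩

lemma semilinear_iUnion {ι : Type*} [Fintype ι] (S : ι → Set M)
    (h : ∀ i, SemilinearSet (S i)) : SemilinearSet (⋃ i, S i) := by
  choose m L hL hS using h
  let σ := Σ i : ι, Fin (m i)
  let e : Fin (Fintype.card σ) ≃ σ := (Fintype.equivFin σ).symm
  refine ⟨Fintype.card σ, fun j => L (e j).1 (e j).2, fun j => hL _ _, ?_⟩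
  have h1 : ⋃ j, L (e j).1 (e j).2 = ⋃ s : σ, L s.1 s.2 :=
    e.surjective.iUnion_comp (g := fun s : σ => L s.1 s.2)
  rw [h1, Set.iUnion_sigma]
  exact Set.iUnion_congr hS

lemma translate_linear (a : M) {E : Set M} (h : LinearSet E) :
    LinearSet ((a + ·) '' E) := by
  obtain ⟨x, m, y, rfl⟩ := h
  refine ⟨a + x, m, y, ?_⟩
  ext v
  constructor
  · rintro ⟨w, ⟨k, rfl⟩, rfl⟩
    exact ⟨k, by rw [add_assoc]⟩
  · rintro ⟨k, rfl⟩
    exact ⟨x + ∑ i, k i • y i, ⟨k, rfl⟩, by rw [add_assoc]⟩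

lemma translate_semilinear (a : M) {E : Set M} (h : SemilinearSet E) :
    SemilinearSet ((a + ·) '' E) := by
  obtain ⟨m, L, hL, rfl⟩ := h
  rw [Set.image_iUnion]
  exact semilinear_iUnion _ fun i => (translate_linear a (hL i)).semilinear

end Aux

lemma shift_linear {n : ℕ} (b : Fin n → ℕ) {E : Set (Fin n → ℕ)}
    (hE : LinearSet E) : SemilinearSet {v | v + b ∈ E} := by
  classical
  obtain ⟨x, m, y, rfl⟩ := hE
  set B := ∑ p, b p with hB
  have hbB : ∀ p, b p ≤ B := fun p =>
    Finset.single_le_sum (f := b) (fun _ _ => Nat.zero_le _) (Finset.mem_univ p)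
  -- For a coefficient vector c, the candidate piece
  let σ : (Fin m → Fin (B + 1)) → Fin n → ℕ := fun c => x + ∑ i, (c i : ℕ) • y i
  let S : (Fin m → Fin (B + 1)) → Set (Fin n → ℕ) := fun c =>
    if b ≤ σ c then {v | ∃ k : Fin m → ℕ, v = (σ c - b) + ∑ i, k i • y i} else ∅
  have hSsemi : ∀ c, SemilinearSet (S c) := by
    intro c
    by_cases h : b ≤ σ c
    · simp only [S, if_pos h]
      exact LinearSet.semilinear ⟨σ c - b, m, y, rfl⟩
    · simp only [S, if_neg h]
      exact semilinear_empty
  have key : {v | v + b ∈ {v | ∃ k : Fin m → ℕ, v = x + ∑ i, k i • y i}} = ⋃ c, S c := by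
    ext v
    simp only [Set.mem_setOf_eq, Set.mem_iUnion]
    constructor
    · rintro ⟨k, hk⟩
      have hvp : ∀ p, v p + b p = x p + ∑ i, k i * y i p := by
        intro p
        have := congrFun hk p
        simpa [Finset.sum_apply] using this
      refine ⟨fun i => ⟨min (k i) B, by omega⟩, ?_⟩
      have hble : b ≤ σ fun i => ⟨min (k i) B, by omega⟩ := by
        intro p
        simp only [σ, Pi.add_apply, Finset.sum_apply, Pi.smul_apply, smul_eq_mul]
        by_cases h : ∃ i, B < k i ∧ 0 < y i p
        · obtain ⟨i, hki, hyi⟩ := h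
          have h1 : (min (k i) B) * y i p ≤ ∑ j, (min (k j) B : ℕ) * y j p :=
            Finset.single_le_sum (f := fun j => min (k j) B * y j p)
              (fun _ _ => Nat.zero_le _) (Finset.mem_univ i)
          have h2 : min (k i) B = B := by omega
          have := hbB p
          nlinarith [h1, h2]
        · push_neg at h
          have hsum : ∑ i, (min (k i) B : ℕ) * y i p = ∑ i, k i * y i p := by
            apply Finset.sum_congr rfl
            intro i _
            rcases Nat.lt_or_ge B (k i) with h' | h'
            · have : y i p = 0 := by have := h i h'; omega
              simp [this]
            · have : min (k i) B = k i := by omega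
              rw [this]
          rw [hsum]
          have := hvp p
          omega
      simp only [S, if_pos hble, Set.mem_setOf_eq]
      refine ⟨fun i => k i - min (k i) B, ?_⟩
      funext p
      have hsplit : ∑ i, k i * y i p
          = ∑ i, (min (k i) B) * y i p + ∑ i, (k i - min (k i) B) * y i p := by
        rw [← Finset.sum_add_distrib]
        apply Finset.sum_congr rfl
        intro i _
        rw [← Nat.add_mul]
        congr 1
        omega
      have hb' := hble p
      simp only [σ, Pi.add_apply, Finset.sum_apply, Pi.smul_apply, smul_eq_mul] at hb'
      have hv := hvp p
      simp only [σ, Pi.add_apply, Pi.sub_apply, Finset.sum_apply, Pi.smul_apply,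
        smul_eq_mul]
      omega
    · rintro ⟨c, hc⟩
      by_cases h : b ≤ σ c
      · simp only [S, if_pos h, Set.mem_setOf_eq] at hc
        obtain ⟨k, rfl⟩ := hc
        refine ⟨fun i => (c i : ℕ) + k i, ?_⟩
        funext p
        have hb' := h p
        simp only [σ, Pi.add_apply, Finset.sum_apply, Pi.smul_apply, smul_eq_mul] at hb'
        have hsplit : ∑ i, ((c i : ℕ) + k i) * y i p
            = ∑ i, (c i : ℕ) * y i p + ∑ i, k i * y i p := by
          rw [← Finset.sum_add_distrib]
          exact Finset.sum_congr rfl fun i _ => Nat.add_mul _ _ _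
        simp only [σ, Pi.add_apply, Pi.sub_apply, Finset.sum_apply, Pi.smul_apply,
          smul_eq_mul, hsplit]
        omega
      · simp only [S, if_neg h] at hc
        exact absurd hc (Set.notMem_empty _)
  rw [key]
  exact semilinear_iUnion _ hSsemi

lemma shift_semilinear {n : ℕ} (b : Fin n → ℕ) {E : Set (Fin n → ℕ)}
    (hE : SemilinearSet E) : SemilinearSet {v | v + b ∈ E} := by
  obtain ⟨m, L, hL, rfl⟩ := hE
  have : {v : Fin n → ℕ | v + b ∈ ⋃ i, L i} = ⋃ i, {v | v + b ∈ L i} := by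
    ext v; simp
  rw [this]
  exact semilinear_iUnion _ fun i => shift_linear b (hL i)

/-- For a Petri net with n places and finitely many transitions, if X ⊆ ℕⁿ is
semilinear then so is pre(X). -/
theorem preSet_semilinear (n : ℕ) {T : Type} [Fintype T]
    (N : PetriNet (Fin n) T) (X : Set (Fin n → ℕ)) (hX : SemilinearSet X) :
    SemilinearSet (preSet N X) := by
  have key : preSet N X
      = ⋃ t : T, ((fun p => N.pre p t) + ·) '' {v | v + N.post t ∈ X} := by
    ext M
    simp only [preSet, Set.mem_setOf_eq, Set.mem_iUnion, Set.mem_image]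
    constructor
    · rintro ⟨M', hM', t, hen, hfire⟩
      refine ⟨t, fun p => M p - N.pre p t, ?_, ?_⟩
      · have : (fun p => M p - N.pre p t) + N.post t = M' := by
          funext p
          have h1 := hen p
          have h2 := hfire p
          simp only [Pi.add_apply]
          omega
        rwa [this]
      · funext p
        have h1 := hen p
        simp only [Pi.add_apply]
        omega
    · rintro ⟨t, v, hv, rfl⟩
      refine ⟨v + N.post t, hv, t, fun p => ?_, fun p => ?_⟩
      · simp only [Pi.add_apply]; omega
      · simp only [Pi.add_apply]; omega
  rw [key]
  exact semilinear_iUnion _ fun t =>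
    translate_semilinear _ (shift_semilinear (N.post t) hX)
end
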